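/- When all agents have additive valuations, every maximum Nash welfare (MNW) allocation of the mixed goods is envy-free up to one good for mixed goods (EF1M) and Pareto optimal (PO). -/

import Mathlib

open MeasureTheory

/-- The interval `I_j = [j/ℓ, (j+1)/ℓ) ⊆ [0,1)` representing the `j`-th of the
`ℓ` divisible goods (so that `I_1, …, I_ℓ` partition the cake `C = [0,1)`). -/
def dgInterval (l : ℕ) (j : Fin l) : Set ℝ :=
  Set.Ico ((j : ℝ) / l) (((j : ℝ) + 1) / l)

/-- An allocation of `m` indivisible goods and of the cake `[0,1)` among `n` agents:
the indivisible goods are partitioned into the bundles `ind i`, and the cake `[0,1)`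
is partitioned into the measurable (Borel) pieces `piece i`. -/
structure Alloc (n m : ℕ) where
  ind : Fin n → Finset (Fin m)
  piece : Fin n → Set ℝ
  ind_partition : ∀ g : Fin m, ∃! i : Fin n, g ∈ ind i
  piece_measurable : ∀ i, MeasurableSet (piece i)
  piece_disjoint : ∀ i j : Fin n, i ≠ j → piece i ∩ piece j = ∅
  piece_cover : (⋃ i, piece i) = Set.Ico (0 : ℝ) 1

section

/- `vM i g` is agent `i`'s (additive) value for the indivisible good `g`, and
`μ i` is the (non-atomic, countably additive, finite) measure giving agent `i`'s
value for pieces of the cake. -/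
variable {n m : ℕ} (vM : Fin n → Fin m → ℝ) (μ : Fin n → Measure ℝ)

/-- Value of agent `i` for agent `j`'s bundle `A_j = M_j ∪ C_j` in allocation `A`. -/
noncomputable def valOn (A : Alloc n m) (i j : Fin n) : ℝ :=
  (∑ g ∈ A.ind j, vM i g) + (μ i (A.piece j)).toReal

/-- Utility of agent `i` in allocation `A`: `u_i(A_i) = u_i(M_i) + u_i(C_i)`. -/
noncomputable def util (A : Alloc n m) (i : Fin n) : ℝ := valOn vM μ A i i

/-- Value of agent `i` for agent `j`'s bundle with the indivisible good `g`
removed: `u_i(A_j \ {g})`. -/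
noncomputable def valOnErase (A : Alloc n m) (i j : Fin n) (g : Fin m) : ℝ :=
  (∑ g' ∈ A.ind j \ {g}, vM i g') + (μ i (A.piece j)).toReal

/-- Pareto optimality: no allocation gives every agent at least as much utility
and some agent strictly more. -/
def PO (A : Alloc n m) : Prop :=
  ¬ ∃ A' : Alloc n m,
      (∀ i, util vM μ A i ≤ util vM μ A' i) ∧ ∃ i, util vM μ A i < util vM μ A' i

/-- The set of agents with positive utility in allocation `A`. -/
noncomputable def posSet (A : Alloc n m) : Finset (Fin n) :=
  Finset.univ.filter (fun i => 0 < util vM μ A i)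

/-- A maximum Nash welfare (MNW) allocation: it maximizes the number of agents with
positive utility and, subject to that, maximizes the product of the positive
utilities. -/
def MNW (A : Alloc n m) : Prop :=
  (∀ A' : Alloc n m, (posSet vM μ A').card ≤ (posSet vM μ A).card) ∧
    ∀ A' : Alloc n m, (posSet vM μ A').card = (posSet vM μ A).card →
      (∏ i ∈ posSet vM μ A', util vM μ A' i) ≤ ∏ i ∈ posSet vM μ A, util vM μ A i

/-- Envy-freeness up to one good for mixed goods (EF1M): for all agents `i, j`,
if `M_j = ∅` then `u_i(A_i) ≥ u_i(A_j)`; otherwise `u_i(A_i) ≥ u_i(A_j \ {g})`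
for some indivisible good `g ∈ A_j`. -/
def EF1M (A : Alloc n m) : Prop :=
  ∀ i j : Fin n,
    (A.ind j = ∅ → valOn vM μ A i j ≤ util vM μ A i) ∧
    (A.ind j ≠ ∅ → ∃ g ∈ A.ind j, valOnErase vM μ A i j g ≤ util vM μ A i)

/-- Envy-freeness for mixed goods (EFM): for all agents `i, j`, if `C_j = ∅` then
`u_i(A_i) ≥ u_i(A_j)` or `u_i(A_i) ≥ u_i(A_j \ {g})` for some indivisible good
`g ∈ A_j`; otherwise `u_i(A_i) ≥ u_i(A_j)`. -/
def EFM (A : Alloc n m) : Prop :=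
  ∀ i j : Fin n,
    (A.piece j = ∅ →
      (valOn vM μ A i j ≤ util vM μ A i ∨
        ∃ g ∈ A.ind j, valOnErase vM μ A i j g ≤ util vM μ A i)) ∧
    (A.piece j ≠ ∅ → valOn vM μ A i j ≤ util vM μ A i)

/-- Envy-freeness up to any good for mixed goods (EFXM): for all agents `i, j`,
if `C_j = ∅` then `u_i(A_i) ≥ u_i(A_j)` or `u_i(A_i) ≥ u_i(A_j \ {g})` for every
indivisible good `g ∈ A_j`; otherwise `u_i(A_i) ≥ u_i(A_j)`. -/
def EFXM (A : Alloc n m) : Prop :=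
  ∀ i j : Fin n,
    (A.piece j = ∅ →
      (valOn vM μ A i j ≤ util vM μ A i ∨
        ∀ g ∈ A.ind j, valOnErase vM μ A i j g ≤ util vM μ A i)) ∧
    (A.piece j ≠ ∅ → valOn vM μ A i j ≤ util vM μ A i)

/-- Weak envy-freeness for mixed goods (weak EFM): for all agents `i, j`, if
`M_j ≠ ∅` and additionally either `C_j = ∅` or `u_i(C_j) = 0`, then
`u_i(A_i) ≥ u_i(A_j \ {g})` for some indivisible good `g ∈ A_j`; otherwise
`u_i(A_i) ≥ u_i(A_j)`. -/
def WeakEFM (A : Alloc n m) : Prop :=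
  ∀ i j : Fin n,
    ((A.ind j ≠ ∅ ∧ (A.piece j = ∅ ∨ (μ i (A.piece j)).toReal = 0)) →
      ∃ g ∈ A.ind j, valOnErase vM μ A i j g ≤ util vM μ A i) ∧
    (¬ (A.ind j ≠ ∅ ∧ (A.piece j = ∅ ∨ (μ i (A.piece j)).toReal = 0)) →
      valOn vM μ A i j ≤ util vM μ A i)

end

open MeasureTheory Set Filter
open scoped ENNReal Topology

/-- Intermediate value property for CDFs of finite nonatomic measures on ℝ. -/
lemma exists_Iic_measure_eq (ρ : Measure ℝ) [IsFiniteMeasure ρ] [NullSingletonClass ρ] {r : ℝ≥0∞}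
    (h0 : 0 < r) (hu : r < ρ Set.univ) : ∃ x : ℝ, ρ (Set.Iic x) = r := by
  set E : Set ℝ := {x | ρ (Set.Iic x) < r} with hE
  have hmono : ∀ ⦃x y : ℝ⦄, x ≤ y → ρ (Set.Iic x) ≤ ρ (Set.Iic y) :=
    fun x y h => measure_mono (Set.Iic_subset_Iic.2 h)
  have hne : E.Nonempty := by
    by_contra h
    rw [Set.not_nonempty_iff_eq_empty] at h
    have hall : ∀ x : ℝ, r ≤ ρ (Set.Iic x) := by
      intro x
      by_contra hx
      have hxE : x ∈ E := not_le.1 hx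
      rw [h] at hxE
      exact hxE
    have hIempty : (⋂ n : ℕ, Set.Iic (-(n : ℝ))) = ∅ := by
      ext x
      simp only [Set.mem_iInter, Set.mem_Iic, Set.mem_empty_iff_false, iff_false, not_forall]
      obtain ⟨k, hk⟩ := exists_nat_gt (-x)
      exact ⟨k, by push_neg; linarith⟩
    have ht : Tendsto (ρ ∘ fun n : ℕ => Set.Iic (-(n : ℝ))) atTop (𝓝 (ρ (⋂ n : ℕ, Set.Iic (-(n : ℝ))))) :=
      tendsto_measure_iInter_atTop (fun n => measurableSet_Iic.nullMeasurableSet)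
        (fun a b hab => Set.Iic_subset_Iic.2 (by exact_mod_cast neg_le_neg (by exact_mod_cast hab)))
        ⟨0, measure_ne_top _ _⟩
    rw [hIempty, measure_empty] at ht
    have : r ≤ 0 := ge_of_tendsto' ht fun n => hall _
    exact absurd this (by simpa using h0.ne')
  have hbdd : BddAbove E := by
    by_contra h
    have hall : ∀ x : ℝ, ρ (Set.Iic x) < r := by
      intro x
      obtain ⟨e, heE, hxe⟩ := not_bddAbove_iff.1 h x
      exact lt_of_le_of_lt (hmono hxe.le) heE
    have huniv : (⋃ n : ℕ, Set.Iic (n : ℝ)) = Set.univ := by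
      ext x
      simp only [Set.mem_iUnion, Set.mem_Iic, Set.mem_univ, iff_true]
      obtain ⟨k, hk⟩ := exists_nat_ge x
      exact ⟨k, hk⟩
    have hm : Monotone fun n : ℕ => Set.Iic (n : ℝ) :=
      fun a b hab => Set.Iic_subset_Iic.2 (by exact_mod_cast hab)
    have := hm.measure_iUnion (μ := ρ)
    rw [huniv] at this
    have : ρ Set.univ ≤ r := this ▸ iSup_le fun n => (hall _).le
    exact absurd hu (not_lt.2 this)
  set c := sSup E with hc
  have hle : ρ (Set.Iio c) ≤ r := by
    have hun : Set.Iio c = ⋃ n : ℕ, Set.Iic (c - 1 / (n + 1)) := by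
      ext x
      simp only [Set.mem_Iio, Set.mem_iUnion, Set.mem_Iic]
      constructor
      · intro hx
        obtain ⟨k, hk⟩ := exists_nat_one_div_lt (show (0:ℝ) < c - x by linarith)
        exact ⟨k, by push_cast at hk ⊢; linarith⟩
      · rintro ⟨k, hk⟩
        have : (0:ℝ) < 1 / (k + 1) := by positivity
        linarith
    have hm : Monotone fun n : ℕ => Set.Iic (c - 1 / ((n:ℝ) + 1)) := by
      intro a b hab
      apply Set.Iic_subset_Iic.2
      have hab' : (a:ℝ) + 1 ≤ (b:ℝ) + 1 := by exact_mod_cast Nat.succ_le_succ hab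
      have h1 : (1:ℝ) / (b + 1) ≤ 1 / (a + 1) := by
        apply one_div_le_one_div_of_le (by positivity) hab'
      linarith
    rw [hun, hm.measure_iUnion]
    apply iSup_le
    intro n
    have hlt : c - 1 / ((n:ℝ) + 1) < c := by
      have : (0:ℝ) < 1 / ((n:ℝ) + 1) := by positivity
      linarith
    obtain ⟨e, heE, he⟩ := exists_lt_of_lt_csSup hne hlt
    exact le_of_lt (lt_of_le_of_lt (hmono he.le) heE)
  have hge : r ≤ ρ (Set.Iic c) := by
    by_contra h
    push_neg at h
    have hIinter : (⋂ n : ℕ, Set.Iic (c + 1 / ((n:ℝ) + 1))) = Set.Iic c := by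
      ext x
      simp only [Set.mem_iInter, Set.mem_Iic]
      constructor
      · intro hx
        by_contra hxc
        push_neg at hxc
        obtain ⟨k, hk⟩ := exists_nat_one_div_lt (show (0:ℝ) < x - c by linarith)
        have := hx k
        linarith
      · intro hx n
        have : (0:ℝ) < 1 / ((n:ℝ) + 1) := by positivity
        linarith
    have ht : Tendsto (ρ ∘ fun n : ℕ => Set.Iic (c + 1 / ((n:ℝ) + 1))) atTop
        (𝓝 (ρ (⋂ n : ℕ, Set.Iic (c + 1 / ((n:ℝ) + 1))))) := by
      apply tendsto_measure_iInter_atTop (fun n => measurableSet_Iic.nullMeasurableSet)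
      · intro a b hab
        apply Set.Iic_subset_Iic.2
        have hab' : (a:ℝ) + 1 ≤ (b:ℝ) + 1 := by exact_mod_cast Nat.succ_le_succ hab
        have h1 : (1:ℝ) / (b + 1) ≤ 1 / (a + 1) := one_div_le_one_div_of_le (by positivity) hab'
        linarith
      · exact ⟨0, measure_ne_top _ _⟩
    rw [hIinter] at ht
    obtain ⟨k, hk⟩ := (ht.eventually_lt_const h).exists
    have hkE : c + 1 / ((k:ℝ) + 1) ∈ E := hk
    have := le_csSup hbdd hkE
    have hpos : (0:ℝ) < 1 / ((k:ℝ) + 1) := by positivity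
    linarith
  refine ⟨c, le_antisymm ?_ hge⟩
  calc ρ (Set.Iic c) ≤ ρ (Set.Iio c ∪ {c}) := measure_mono (by
        intro x hx
        rcases eq_or_lt_of_le (Set.mem_Iic.1 hx) with h | h
        · exact Or.inr (by simp [h])
        · exact Or.inl h)
    _ ≤ ρ (Set.Iio c) + ρ {c} := measure_union_le _ _
    _ = ρ (Set.Iio c) := by rw [measure_singleton, add_zero]
    _ ≤ r := hle

/-- Halving: split a measurable set into a piece of exactly half `ν₁`-measure whose
`ν₂`-measure is at most half. -/
lemma exists_half_le (ν₁ ν₂ : Measure ℝ) [IsFiniteMeasure ν₁] [IsFiniteMeasure ν₂]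
    [NullSingletonClass ν₁] (s : Set ℝ) (hs : MeasurableSet s) :
    ∃ t, t ⊆ s ∧ MeasurableSet t ∧ 2 * ν₁ t = ν₁ s ∧ 2 * ν₂ t ≤ ν₂ s := by
  by_cases h0 : ν₁ s = 0
  · have hsum : ν₂ (s ∩ Set.Iic 0) + ν₂ (s \ Set.Iic 0) = ν₂ s :=
      measure_inter_add_diff s measurableSet_Iic
    have hz : ∀ t : Set ℝ, t ⊆ s → 2 * ν₁ t = ν₁ s := by
      intro t hts
      have : ν₁ t = 0 := le_antisymm (h0 ▸ measure_mono hts) zero_le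
      rw [this, h0, mul_zero]
    rcases le_or_gt (ν₂ (s ∩ Set.Iic 0)) (ν₂ (s \ Set.Iic 0)) with h | h
    · refine ⟨s ∩ Set.Iic 0, Set.inter_subset_left, hs.inter measurableSet_Iic,
        hz _ Set.inter_subset_left, ?_⟩
      calc 2 * ν₂ (s ∩ Set.Iic 0) = ν₂ (s ∩ Set.Iic 0) + ν₂ (s ∩ Set.Iic 0) := two_mul _
        _ ≤ ν₂ (s ∩ Set.Iic 0) + ν₂ (s \ Set.Iic 0) := by gcongr
        _ = ν₂ s := hsum
    · refine ⟨s \ Set.Iic 0, Set.diff_subset, hs.diff measurableSet_Iic,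
        hz _ Set.diff_subset, ?_⟩
      calc 2 * ν₂ (s \ Set.Iic 0) = ν₂ (s \ Set.Iic 0) + ν₂ (s \ Set.Iic 0) := two_mul _
        _ ≤ ν₂ (s ∩ Set.Iic 0) + ν₂ (s \ Set.Iic 0) := by gcongr
        _ = ν₂ s := hsum
  · have hρfin : IsFiniteMeasure (ν₁.restrict s) := inferInstance
    have hρna : NullSingletonClass (ν₁.restrict s) := inferInstance
    have huniv : (ν₁.restrict s) Set.univ = ν₁ s := by
      rw [Measure.restrict_apply MeasurableSet.univ, Set.univ_inter]
    obtain ⟨x, hx⟩ := exists_Iic_measure_eq (ν₁.restrict s)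
      (r := ν₁ s / 2) (ENNReal.half_pos h0) (by rw [huniv]; exact ENNReal.half_lt_self h0 (measure_ne_top _ _))
    rw [Measure.restrict_apply measurableSet_Iic] at hx
    have h1 : ν₁ (s ∩ Set.Iic x) = ν₁ s / 2 := by rw [Set.inter_comm] at hx; exact hx
    have h2 : ν₁ (s \ Set.Iic x) = ν₁ s / 2 := by
      have := measure_inter_add_diff (μ := ν₁) (t := Set.Iic x) s measurableSet_Iic
      rw [h1] at this
      have hh : ν₁ s / 2 + ν₁ (s \ Set.Iic x) = ν₁ s / 2 + ν₁ s / 2 := by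
        rw [this, ENNReal.add_halves]
      exact (ENNReal.add_right_inj
        (ne_top_of_le_ne_top (measure_ne_top ν₁ s) ENNReal.half_le_self)).1 hh
    have hsum : ν₂ (s ∩ Set.Iic x) + ν₂ (s \ Set.Iic x) = ν₂ s :=
      measure_inter_add_diff s measurableSet_Iic
    have htwo : (2 : ℝ≥0∞) * (ν₁ s / 2) = ν₁ s :=
      ENNReal.mul_div_cancel' (by norm_num) (by norm_num)
    rcases le_or_gt (ν₂ (s ∩ Set.Iic x)) (ν₂ (s \ Set.Iic x)) with h | h
    · refine ⟨s ∩ Set.Iic x, Set.inter_subset_left, hs.inter measurableSet_Iic, by rw [h1, htwo], ?_⟩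
      calc 2 * ν₂ (s ∩ Set.Iic x) = ν₂ (s ∩ Set.Iic x) + ν₂ (s ∩ Set.Iic x) := two_mul _
        _ ≤ ν₂ (s ∩ Set.Iic x) + ν₂ (s \ Set.Iic x) := by gcongr
        _ = ν₂ s := hsum
    · refine ⟨s \ Set.Iic x, Set.diff_subset, hs.diff measurableSet_Iic, by rw [h2, htwo], ?_⟩
      calc 2 * ν₂ (s \ Set.Iic x) = ν₂ (s \ Set.Iic x) + ν₂ (s \ Set.Iic x) := two_mul _
        _ ≤ ν₂ (s ∩ Set.Iic x) + ν₂ (s \ Set.Iic x) := by gcongr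
        _ = ν₂ s := hsum

/-- Iterated halving. -/
lemma exists_pow_piece (ν₁ ν₂ : Measure ℝ) [IsFiniteMeasure ν₁] [IsFiniteMeasure ν₂]
    [NullSingletonClass ν₁] (k : ℕ) (s : Set ℝ) (hs : MeasurableSet s) :
    ∃ t, t ⊆ s ∧ MeasurableSet t ∧ 2 ^ k * ν₁ t = ν₁ s ∧ 2 ^ k * ν₂ t ≤ ν₂ s := by
  induction k generalizing s with
  | zero => exact ⟨s, subset_rfl, hs, by simp, by simp⟩
  | succ k ih =>
    obtain ⟨t, hts, htm, h1, h2⟩ := ih s hs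
    obtain ⟨u, hut, hum, hu1, hu2⟩ := exists_half_le ν₁ ν₂ t htm
    refine ⟨u, hut.trans hts, hum, ?_, ?_⟩
    · calc 2 ^ (k+1) * ν₁ u = 2 ^ k * (2 * ν₁ u) := by ring
        _ = 2 ^ k * ν₁ t := by rw [hu1]
        _ = ν₁ s := h1
    · calc 2 ^ (k+1) * ν₂ u = 2 ^ k * (2 * ν₂ u) := by ring
        _ ≤ 2 ^ k * ν₂ t := by gcongr
        _ ≤ ν₂ s := h2

section Transfer

variable {n m : ℕ} (vM : Fin n → Fin m → ℝ) (μ : Fin n → Measure ℝ)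
  [∀ i, IsFiniteMeasure (μ i)]

lemma util_nonneg (hnonneg : ∀ i g, 0 ≤ vM i g) (A : Alloc n m) (i : Fin n) :
    0 ≤ util vM μ A i :=
  add_nonneg (Finset.sum_nonneg fun g _ => hnonneg i g) ENNReal.toReal_nonneg

lemma valOn_nonneg (hnonneg : ∀ i g, 0 ≤ vM i g) (A : Alloc n m) (i j : Fin n) :
    0 ≤ valOn vM μ A i j :=
  add_nonneg (Finset.sum_nonneg fun g _ => hnonneg i g) ENNReal.toReal_nonneg

lemma mem_posSet_iff (A : Alloc n m) (i : Fin n) :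
    i ∈ posSet vM μ A ↔ 0 < util vM μ A i := by
  simp [posSet]

lemma ind_disjoint (A : Alloc n m) {i j : Fin n} (hij : i ≠ j) :
    Disjoint (A.ind i) (A.ind j) := by
  rw [Finset.disjoint_left]
  intro g hgi hgj
  obtain ⟨k, _, hk⟩ := A.ind_partition g
  exact hij ((hk i hgi).trans (hk j hgj).symm)

lemma piece_owner (A : Alloc n m) {x : ℝ} {i j : Fin n} (hi : x ∈ A.piece i)
    (hj : x ∈ A.piece j) : i = j := by
  by_contra h
  have := A.piece_disjoint i j h
  exact absurd (this ▸ Set.mem_inter hi hj) (Set.notMem_empty x)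

variable {vM μ}

/-- Move goods `T` and piece `S` from agent `j` to agent `i`. -/
def Alloc.transfer (A : Alloc n m) (i j : Fin n) (hij : i ≠ j) (T : Finset (Fin m))
    (hT : T ⊆ A.ind j) (S : Set ℝ) (hS : MeasurableSet S) (hSs : S ⊆ A.piece j) :
    Alloc n m where
  ind k := if k = i then A.ind i ∪ T else if k = j then A.ind j \ T else A.ind k
  piece k := if k = i then A.piece i ∪ S else if k = j then A.piece j \ S else A.piece k
  ind_partition g := by
    obtain ⟨k₀, hk₀, huniq⟩ := A.ind_partition g
    by_cases hgT : g ∈ T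
    · refine ⟨i, by simp [Finset.mem_union, hgT], ?_⟩
      intro k hk
      by_cases hki : k = i
      · exact hki
      · rw [if_neg hki] at hk
        by_cases hkj : k = j
        · rw [if_pos hkj] at hk
          exact absurd (Finset.mem_sdiff.1 hk).2 (not_not.2 hgT)
        · rw [if_neg hkj] at hk
          exact absurd ((huniq k hk).trans (huniq j (hT hgT)).symm) hkj
    · have hmem : ∀ k : Fin n, g ∈ (if k = i then A.ind i ∪ T else if k = j then A.ind j \ T
          else A.ind k) → g ∈ A.ind k := by
        intro k hk
        by_cases hki : k = i
        · rw [if_pos hki] at hk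
          rcases Finset.mem_union.1 hk with h | h
          · exact hki ▸ h
          · exact absurd h hgT
        · rw [if_neg hki] at hk
          by_cases hkj : k = j
          · rw [if_pos hkj] at hk; exact hkj ▸ (Finset.mem_sdiff.1 hk).1
          · rwa [if_neg hkj] at hk
      refine ⟨k₀, ?_, fun k hk => huniq k (hmem k hk)⟩
      show g ∈ (if k₀ = i then A.ind i ∪ T else if k₀ = j then A.ind j \ T else A.ind k₀)
      by_cases hki : k₀ = i
      · rw [if_pos hki]; exact Finset.mem_union.2 (Or.inl (hki ▸ hk₀))
      · rw [if_neg hki]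
        by_cases hkj : k₀ = j
        · rw [if_pos hkj]; exact Finset.mem_sdiff.2 ⟨hkj ▸ hk₀, hgT⟩
        · rwa [if_neg hkj]
  piece_measurable k := by
    split_ifs
    · exact (A.piece_measurable i).union hS
    · exact (A.piece_measurable j).diff hS
    · exact A.piece_measurable k
  piece_disjoint a b hab := by
    rw [Set.eq_empty_iff_forall_notMem]
    rintro x ⟨hxa, hxb⟩
    have key : ∀ c : Fin n, x ∈ (if c = i then A.piece i ∪ S else if c = j then A.piece j \ S
        else A.piece c) → (x ∈ S ∧ c = i) ∨ (x ∉ S ∧ x ∈ A.piece c) := by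
      intro c hc
      by_cases hxS : x ∈ S
      · left
        refine ⟨hxS, ?_⟩
        by_cases hci : c = i
        · exact hci
        · rw [if_neg hci] at hc
          by_cases hcj : c = j
          · rw [if_pos hcj] at hc; exact absurd hxS hc.2
          · rw [if_neg hcj] at hc
            exact absurd (piece_owner A hc (hSs hxS)) hcj
      · right
        refine ⟨hxS, ?_⟩
        by_cases hci : c = i
        · rw [if_pos hci] at hc
          rcases hc with h | h
          · exact hci ▸ h
          · exact absurd h hxS
        · rw [if_neg hci] at hc
          by_cases hcj : c = j
          · rw [if_pos hcj] at hc; exact hcj ▸ hc.1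
          · rwa [if_neg hcj] at hc
    rcases key a hxa with ⟨hS1, ha⟩ | ⟨hS1, ha⟩ <;> rcases key b hxb with ⟨hS2, hb⟩ | ⟨hS2, hb⟩
    · exact hab (ha.trans hb.symm)
    · exact hS2 hS1
    · exact hS1 hS2
    · exact hab (piece_owner A ha hb)
  piece_cover := by
    have : (⋃ k, (if k = i then A.piece i ∪ S else if k = j then A.piece j \ S
        else A.piece k)) = ⋃ k, A.piece k := by
      apply Set.Subset.antisymm
      · apply Set.iUnion_subset
        intro k
        by_cases hki : k = i
        · rw [if_pos hki]
          apply Set.union_subset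
          · exact Set.subset_iUnion A.piece i
          · exact hSs.trans (Set.subset_iUnion A.piece j)
        · rw [if_neg hki]
          by_cases hkj : k = j
          · rw [if_pos hkj]
            exact Set.diff_subset.trans (Set.subset_iUnion A.piece j)
          · rw [if_neg hkj]; exact Set.subset_iUnion A.piece k
      · apply Set.iUnion_subset
        intro k
        intro x hx
        rw [Set.mem_iUnion]
        by_cases hxS : x ∈ S
        · exact ⟨i, by rw [if_pos rfl]; exact Or.inr hxS⟩
        · by_cases hkj : k = j
          · refine ⟨j, ?_⟩
            rw [if_neg hij.symm, if_pos rfl]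
            exact ⟨hkj ▸ hx, hxS⟩
          · by_cases hki : k = i
            · refine ⟨i, ?_⟩
              rw [if_pos rfl]
              exact Or.inl (hki ▸ hx)
            · exact ⟨k, by rw [if_neg hki, if_neg hkj]; exact hx⟩
    rw [this, A.piece_cover]

variable (A : Alloc n m) (i j : Fin n) (hij : i ≠ j) (T : Finset (Fin m))
  (hT : T ⊆ A.ind j) (S : Set ℝ) (hS : MeasurableSet S) (hSs : S ⊆ A.piece j)

lemma util_transfer_other (k : Fin n) (hki : k ≠ i) (hkj : k ≠ j) :
    util vM μ (A.transfer i j hij T hT S hS hSs) k = util vM μ A k := by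
  simp only [util, valOn, Alloc.transfer, if_neg hki, if_neg hkj]

lemma util_transfer_i :
    util vM μ (A.transfer i j hij T hT S hS hSs) i
      = util vM μ A i + ((∑ g ∈ T, vM i g) + (μ i S).toReal) := by
  have hd : Disjoint (A.ind i) T :=
    (ind_disjoint A hij).mono_right hT
  have hdS : Disjoint (A.piece i) S := by
    rw [Set.disjoint_left]
    intro x hx hxS
    exact hij (piece_owner A hx (hSs hxS))
  simp only [util, valOn, Alloc.transfer, eq_self_iff_true, if_true]
  rw [Finset.sum_union hd, measure_union hdS hS,
    ENNReal.toReal_add (measure_ne_top _ _) (measure_ne_top _ _)]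
  ring

lemma util_transfer_j :
    util vM μ (A.transfer i j hij T hT S hS hSs) j
      = util vM μ A j - ((∑ g ∈ T, vM j g) + (μ j S).toReal) := by
  simp only [util, valOn, Alloc.transfer, if_neg hij.symm, eq_self_iff_true, if_true]
  rw [Finset.sum_sdiff_eq_sub hT, measure_diff hSs hS.nullMeasurableSet (measure_ne_top _ _),
    ENNReal.toReal_sub_of_le (measure_mono hSs) (measure_ne_top _ _)]
  ring

end Transfer

section Main

variable {n m : ℕ} {vM : Fin n → Fin m → ℝ} {μ : Fin n → Measure ℝ}
  [∀ i, IsFiniteMeasure (μ i)]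

lemma mnw_card_contra {A : Alloc n m} (hA : MNW vM μ A) (A' : Alloc n m)
    (hpos : ∀ k, 0 < util vM μ A k → 0 < util vM μ A' k) (k0 : Fin n)
    (h0 : ¬ 0 < util vM μ A k0) (h0' : 0 < util vM μ A' k0) : False := by
  have hsub : insert k0 (posSet vM μ A) ⊆ posSet vM μ A' := by
    intro k hk
    rcases Finset.mem_insert.1 hk with rfl | hk
    · exact (mem_posSet_iff vM μ A' k).2 h0'
    · exact (mem_posSet_iff vM μ A' k).2 (hpos k ((mem_posSet_iff vM μ A k).1 hk))
  have h1 : (posSet vM μ A).card + 1 ≤ (posSet vM μ A').card := by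
    rw [← Finset.card_insert_of_notMem (fun hk => h0 ((mem_posSet_iff vM μ A k0).1 hk))]
    exact Finset.card_le_card hsub
  have := hA.1 A'
  omega

lemma mnw_prod_contra {A : Alloc n m} (hA : MNW vM μ A) (A' : Alloc n m)
    (hpos : ∀ k, 0 < util vM μ A k → 0 < util vM μ A' k)
    (hlt : ∏ k ∈ posSet vM μ A, util vM μ A k < ∏ k ∈ posSet vM μ A, util vM μ A' k) :
    False := by
  have hsub : posSet vM μ A ⊆ posSet vM μ A' := fun k hk =>
    (mem_posSet_iff vM μ A' k).2 (hpos k ((mem_posSet_iff vM μ A k).1 hk))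
  have heq : posSet vM μ A' = posSet vM μ A :=
    (Finset.eq_of_subset_of_card_le hsub (hA.1 A')).symm
  have h2 := hA.2 A' (by rw [heq])
  rw [heq] at h2
  linarith

lemma prod_lt_one_change {s : Finset (Fin n)} {f g : Fin n → ℝ} {i : Fin n} (hi : i ∈ s)
    (hpos : ∀ k ∈ s, 0 < f k) (heq : ∀ k ∈ s, k ≠ i → g k = f k) (hlt : f i < g i) :
    ∏ k ∈ s, f k < ∏ k ∈ s, g k := by
  rw [← Finset.mul_prod_erase s f hi, ← Finset.mul_prod_erase s g hi]
  have hR : ∏ k ∈ s.erase i, g k = ∏ k ∈ s.erase i, f k :=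
    Finset.prod_congr rfl fun k hk =>
      heq k (Finset.mem_of_mem_erase hk) (Finset.ne_of_mem_erase hk)
  rw [hR]
  exact mul_lt_mul_of_pos_right hlt
    (Finset.prod_pos fun k hk => hpos k (Finset.mem_of_mem_erase hk))

lemma prod_lt_two_change {s : Finset (Fin n)} {f g : Fin n → ℝ} {i j : Fin n} (hi : i ∈ s)
    (hj : j ∈ s) (hij : i ≠ j) (hpos : ∀ k ∈ s, 0 < f k)
    (heq : ∀ k ∈ s, k ≠ i → k ≠ j → g k = f k) (hlt : f i * f j < g i * g j) :
    ∏ k ∈ s, f k < ∏ k ∈ s, g k := by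
  have hjmem : j ∈ s.erase i := Finset.mem_erase.2 ⟨hij.symm, hj⟩
  rw [← Finset.mul_prod_erase s f hi, ← Finset.mul_prod_erase _ f hjmem, ← mul_assoc,
    ← Finset.mul_prod_erase s g hi, ← Finset.mul_prod_erase _ g hjmem, ← mul_assoc]
  have hR : ∏ k ∈ (s.erase i).erase j, g k = ∏ k ∈ (s.erase i).erase j, f k := by
    apply Finset.prod_congr rfl
    intro k hk
    have hks : k ∈ s := Finset.mem_of_mem_erase (Finset.mem_of_mem_erase hk)
    exact heq k hks (Finset.ne_of_mem_erase (Finset.mem_of_mem_erase hk))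
      (Finset.ne_of_mem_erase hk)
  rw [hR]
  apply mul_lt_mul_of_pos_right hlt
  exact Finset.prod_pos fun k hk =>
    hpos k (Finset.mem_of_mem_erase (Finset.mem_of_mem_erase hk))

lemma valOnErase_eq (A : Alloc n m) {i j : Fin n} {g : Fin m} (hg : g ∈ A.ind j) :
    valOnErase vM μ A i j g = valOn vM μ A i j - vM i g := by
  unfold valOnErase valOn
  rw [Finset.sum_sdiff_eq_sub (Finset.singleton_subset_iff.2 hg), Finset.sum_singleton]
  ring

lemma no_envy {A : Alloc n m} (hnonneg : ∀ i g, 0 ≤ vM i g)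
    (hatom : ∀ (i : Fin n) (x : ℝ), μ i {x} = 0) (hA : MNW vM μ A) {i j : Fin n} (hij : i ≠ j)
    (hviol : (A.ind j = ∅ ∧ util vM μ A i < valOn vM μ A i j) ∨
      (A.ind j ≠ ∅ ∧ ∀ g ∈ A.ind j, util vM μ A i < valOnErase vM μ A i j g)) : False := by
  haveI : ∀ k : Fin n, NullSingletonClass (μ k) := fun k => ⟨hatom k⟩
  set a := util vM μ A i with ha_def
  set b := util vM μ A j with hb_def
  set P := valOn vM μ A i j with hP_def
  have ha0 : 0 ≤ a := util_nonneg vM μ hnonneg A i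
  have hb0 : 0 ≤ b := util_nonneg vM μ hnonneg A j
  -- the two basic consequences of the violation
  have hPa : a < P := by
    rcases hviol with ⟨_, h⟩ | ⟨hne, h⟩
    · exact h
    · obtain ⟨g₀, hg₀⟩ := Finset.nonempty_iff_ne_empty.2 hne
      have := h g₀ hg₀
      rw [valOnErase_eq A hg₀] at this
      have := hnonneg i g₀
      linarith
  have hPg : ∀ g ∈ A.ind j, a + vM i g < P := by
    rcases hviol with ⟨hemp, _⟩ | ⟨_, h⟩
    · intro g hg; rw [hemp] at hg; exact absurd hg (Finset.notMem_empty g)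
    · intro g hg
      have := h g hg
      rw [valOnErase_eq A hg] at this
      linarith
  have hPsum : P = (∑ g ∈ A.ind j, vM i g) + (μ i (A.piece j)).toReal := rfl
  have hbsum : b = (∑ g ∈ A.ind j, vM j g) + (μ j (A.piece j)).toReal := rfl
  by_cases hbpos : 0 < b
  · by_cases hapos : 0 < a
    · -- main product case
      -- main product case: both i and j have positive utility
      set pC := (μ i (A.piece j)).toReal with hpC_def
      set qC := (μ j (A.piece j)).toReal with hqC_def
      have hpC0 : 0 ≤ pC := ENNReal.toReal_nonneg
      have hqC0 : 0 ≤ qC := ENNReal.toReal_nonneg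
      have hP0 : 0 < P := lt_trans hapos hPa
      have hposmem_i : i ∈ posSet vM μ A := (mem_posSet_iff vM μ A i).2 hapos
      have hposmem_j : j ∈ posSet vM μ A := (mem_posSet_iff vM μ A j).2 hbpos
      by_cases hcaseI : ∃ g ∈ A.ind j, 0 < vM i g ∧ vM j g * P ≤ vM i g * b
      · obtain ⟨g, hg, hpg, hratio⟩ := hcaseI
        have hgP : a + vM i g < P := hPg g hg
        have hqg : 0 ≤ vM j g := hnonneg j g
        have hkey : a * b < (a + vM i g) * (b - vM j g) := by
          rcases hqg.eq_or_lt with h | h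
          · rw [← h]; nlinarith
          · nlinarith
        have hbq : 0 < b - vM j g := by nlinarith
        set A' := A.transfer i j hij {g} (Finset.singleton_subset_iff.2 hg) ∅
          MeasurableSet.empty (Set.empty_subset _) with hA'
        have hUi : util vM μ A' i = a + vM i g := by
          rw [hA', util_transfer_i, Finset.sum_singleton]; simp [← ha_def]
        have hUj : util vM μ A' j = b - vM j g := by
          rw [hA', util_transfer_j, Finset.sum_singleton]; simp [← hb_def]
        apply mnw_prod_contra hA A' ?_ ?_
        · intro k hk
          by_cases hki : k = i
          · rw [hki, hUi]; linarith
          · by_cases hkj : k = j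
            · rw [hkj, hUj]; exact hbq
            · rwa [hA', util_transfer_other _ _ _ _ _ _ _ _ _ k hki hkj]
        · apply prod_lt_two_change hposmem_i hposmem_j hij
            (fun k hk => (mem_posSet_iff vM μ A k).1 hk)
          · intro k hk hki hkj
            exact hA' ▸ util_transfer_other _ _ _ _ _ _ _ _ _ k hki hkj
          · rw [hUi, hUj, ← ha_def, ← hb_def]; exact hkey
      · push_neg at hcaseI
        have hallg : ∀ g ∈ A.ind j, vM i g * b ≤ vM j g * P := by
          intro g hg
          rcases (hnonneg i g).eq_or_lt with h | h
          · rw [← h, zero_mul]; exact mul_nonneg (hnonneg j g) (le_of_lt hP0)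
          · exact (hcaseI g hg h).le
        have hsum : (∑ g ∈ A.ind j, vM i g) * b ≤ (∑ g ∈ A.ind j, vM j g) * P := by
          rw [Finset.sum_mul, Finset.sum_mul]
          exact Finset.sum_le_sum hallg
        have hqM : (∑ g ∈ A.ind j, vM j g) ≤ b := by
          rw [hbsum]; linarith
        have hpCpos : 0 < pC := by
          rcases hpC0.eq_or_lt with h | h
          · exfalso
            have hPM : P = ∑ g ∈ A.ind j, vM i g := by rw [hPsum, ← h, add_zero]
            have hpM0 : 0 < ∑ g ∈ A.ind j, vM i g := by rw [← hPM]; exact hP0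
            obtain ⟨g, hg, hpg⟩ : ∃ g ∈ A.ind j, 0 < vM i g := by
              by_contra hcon
              push_neg at hcon
              have : ∑ g ∈ A.ind j, vM i g ≤ 0 := Finset.sum_nonpos fun g hg => hcon g hg
              linarith
            have hstrict : (∑ g ∈ A.ind j, vM i g) * b < (∑ g ∈ A.ind j, vM j g) * P := by
              rw [Finset.sum_mul, Finset.sum_mul]
              exact Finset.sum_lt_sum hallg ⟨g, hg, hcaseI g hg hpg⟩
            nlinarith
          · exact h
        have hqCP : qC * P ≤ pC * b := by
          have e1 : qC * P = b * P - (∑ g ∈ A.ind j, vM j g) * P := by rw [hbsum]; ring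
          have e2 : pC * b = P * b - (∑ g ∈ A.ind j, vM i g) * b := by rw [hPsum]; ring
          linarith
        -- choose k with pC / 2^k < P - a
        obtain ⟨k, hk⟩ : ∃ k : ℕ, pC / 2 ^ k < P - a := by
          obtain ⟨k, hk⟩ := pow_unbounded_of_one_lt (pC / (P - a)) (by norm_num : (1:ℝ) < 2)
          refine ⟨k, ?_⟩
          have hPa' : (0:ℝ) < P - a := by linarith
          rw [div_lt_iff₀ (by positivity : (0:ℝ) < 2 ^ k)]
          rw [div_lt_iff₀ hPa'] at hk
          rw [mul_comm]
          exact hk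
        obtain ⟨t, hts, htm, h1, h2⟩ := exists_pow_piece (μ i) (μ j) k (A.piece j)
          (A.piece_measurable j)
        set pt := (μ i t).toReal with hpt_def
        set qt := (μ j t).toReal with hqt_def
        have hpt : 2 ^ k * pt = pC := by
          have := congrArg ENNReal.toReal h1
          rwa [ENNReal.toReal_mul, ENNReal.toReal_pow, ENNReal.toReal_ofNat] at this
        have hqt : 2 ^ k * qt ≤ qC := by
          have := ENNReal.toReal_mono (measure_ne_top _ _) h2
          rwa [ENNReal.toReal_mul, ENNReal.toReal_pow, ENNReal.toReal_ofNat] at this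
        have h2k : (0:ℝ) < 2 ^ k := by positivity
        have hpt0 : 0 < pt := by nlinarith [h2k, hpt, hpCpos]
        have hqt0 : 0 ≤ qt := ENNReal.toReal_nonneg
        have hptP : a + pt < P := by
          have hpt' : pt = pC / 2 ^ k := by
            rw [eq_div_iff (ne_of_gt h2k)]
            linarith [hpt]
          rw [hpt']; linarith
        have hkey : qt * (a + pt) < pt * b := by
          rcases hqt0.eq_or_lt with h | h
          · rw [← h, zero_mul]; positivity
          · have hqCpos : 0 < qC := lt_of_lt_of_le (mul_pos h2k h) hqt
            have c1 : (2 ^ k * qt) * (a + pt) ≤ qC * (a + pt) :=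
              mul_le_mul_of_nonneg_right hqt (by linarith)
            have c2 : qC * (a + pt) < qC * P := by
              apply mul_lt_mul_of_pos_left hptP hqCpos
            have c3 : qC * P ≤ (2 ^ k * pt) * b := by rw [hpt]; exact hqCP
            have cc : (2 ^ k * qt) * (a + pt) < (2 ^ k * pt) * b :=
              lt_of_le_of_lt c1 (lt_of_lt_of_le c2 c3)
            have hh : (2:ℝ) ^ k * (qt * (a + pt)) < 2 ^ k * (pt * b) := by
              have e1 : (2:ℝ) ^ k * (qt * (a + pt)) = (2 ^ k * qt) * (a + pt) := by ring
              have e2 : (2:ℝ) ^ k * (pt * b) = (2 ^ k * pt) * b := by ring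
              rw [e1, e2]; exact cc
            exact lt_of_mul_lt_mul_left hh h2k.le
        have hkey2 : a * b < (a + pt) * (b - qt) := by nlinarith [hkey]
        have hbq : 0 < b - qt := by nlinarith [hkey, mul_nonneg hqt0 ha0, mul_pos hpt0 hbpos]
        set A' := A.transfer i j hij ∅ (Finset.empty_subset _) t htm hts with hA'
        have hUi : util vM μ A' i = a + pt := by
          rw [hA', util_transfer_i, Finset.sum_empty, zero_add, ← hpt_def, ← ha_def]
        have hUj : util vM μ A' j = b - qt := by
          rw [hA', util_transfer_j, Finset.sum_empty, zero_add, ← hqt_def, ← hb_def]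
        apply mnw_prod_contra hA A' ?_ ?_
        · intro k' hk'
          by_cases hki : k' = i
          · rw [hki, hUi]; linarith
          · by_cases hkj : k' = j
            · rw [hkj, hUj]; exact hbq
            · rwa [hA', util_transfer_other _ _ _ _ _ _ _ _ _ k' hki hkj]
        · apply prod_lt_two_change hposmem_i hposmem_j hij
            (fun k' hk' => (mem_posSet_iff vM μ A k').1 hk')
          · intro k' hk' hki hkj
            exact hA' ▸ util_transfer_other _ _ _ _ _ _ _ _ _ k' hki hkj
          · rw [hUi, hUj, ← ha_def, ← hb_def]; exact hkey2

    · -- a = 0 : make i positive while keeping j positive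
      have ha : a = 0 := le_antisymm (not_lt.1 hapos) ha0
      by_cases hmu : μ i (A.piece j) = 0
      · -- transfer a single good
        have hPsum' : P = ∑ g ∈ A.ind j, vM i g := by
          rw [hPsum, hmu]; simp
        have hne : A.ind j ≠ ∅ := by
          intro hemp
          rw [hPsum', hemp, Finset.sum_empty] at hPa
          linarith
        obtain ⟨g₀, hg₀⟩ := Finset.nonempty_iff_ne_empty.2 hne
        have hexists : ∀ g' ∈ A.ind j, ∃ g₁ ∈ A.ind j, g₁ ≠ g' ∧ 0 < vM i g₁ := by
          intro g' hg'
          have h1 := hPg g' hg'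
          rw [ha, zero_add, hPsum'] at h1
          have h2 : 0 < ∑ g ∈ A.ind j \ {g'}, vM i g := by
            have := Finset.sum_sdiff_eq_sub (Finset.singleton_subset_iff.2 hg')
              (f := fun g => vM i g)
            rw [this, Finset.sum_singleton]
            linarith
          by_contra hcon
          push_neg at hcon
          have hle : ∑ g ∈ A.ind j \ {g'}, vM i g ≤ 0 := Finset.sum_nonpos (by
            intro g hg
            rcases Finset.mem_sdiff.1 hg with ⟨hg1, hg2⟩
            exact hcon g hg1 (by simpa using hg2))
          linarith
        obtain ⟨g₁, hg₁, _, hp₁⟩ := hexists g₀ hg₀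
        obtain ⟨g₂, hg₂, hne₁₂, hp₂⟩ := hexists g₁ hg₁
        -- at least one of g₁, g₂ can be removed keeping j positive
        have hsum2 : vM j g₁ + vM j g₂ ≤ b := by
          have hsub : ({g₁, g₂} : Finset (Fin m)) ⊆ A.ind j := by
            intro g hg
            rcases Finset.mem_insert.1 hg with rfl | hg
            · exact hg₁
            · exact (Finset.mem_singleton.1 hg) ▸ hg₂
          have := Finset.sum_le_sum_of_subset_of_nonneg hsub
            (fun g _ _ => hnonneg j g) (f := fun g => vM j g)
          rw [Finset.sum_pair (Ne.symm hne₁₂)] at this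
          rw [hbsum]
          have := ENNReal.toReal_nonneg (a := μ j (A.piece j))
          linarith
        obtain ⟨g, hg, hpg, hqg⟩ : ∃ g ∈ A.ind j, 0 < vM i g ∧ vM j g < b := by
          rcases lt_or_ge (vM j g₁) b with h | h
          · exact ⟨g₁, hg₁, hp₁, h⟩
          · refine ⟨g₂, hg₂, hp₂, ?_⟩
            have := hnonneg j g₁
            linarith
        -- do the transfer
        set A' := A.transfer i j hij {g} (Finset.singleton_subset_iff.2 hg) ∅
          MeasurableSet.empty (Set.empty_subset _) with hA'
        have hUi : util vM μ A' i = a + vM i g := by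
          rw [hA', util_transfer_i, Finset.sum_singleton]
          simp [← ha_def]
        have hUj : util vM μ A' j = b - vM j g := by
          rw [hA', util_transfer_j, Finset.sum_singleton]
          simp [← hb_def]
        apply mnw_card_contra hA A' ?_ i hapos (by rw [hUi, ha, zero_add]; exact hpg)
        intro k hk
        by_cases hki : k = i
        · rw [hki, hUi, ha, zero_add]; exact hpg
        · by_cases hkj : k = j
          · rw [hkj, hUj]; linarith
          · rwa [hA', util_transfer_other _ _ _ _ _ _ _ _ _ k hki hkj]
      · -- transfer half of the cake piece
        obtain ⟨t, hts, htm, h1, h2⟩ := exists_half_le (μ i) (μ j) (A.piece j)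
          (A.piece_measurable j)
        set A' := A.transfer i j hij ∅ (Finset.empty_subset _) t htm hts with hA'
        have hUi : util vM μ A' i = a + (μ i t).toReal := by
          rw [hA', util_transfer_i, Finset.sum_empty, zero_add]
        have hUj : util vM μ A' j = b - (μ j t).toReal := by
          rw [hA', util_transfer_j, Finset.sum_empty, zero_add]
        have hpt : 0 < (μ i t).toReal := by
          apply ENNReal.toReal_pos ?_ (measure_ne_top _ _)
          intro h0
          rw [h0, mul_zero] at h1
          exact hmu h1.symm
        have hqt : 2 * (μ j t).toReal ≤ (μ j (A.piece j)).toReal := by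
          have := ENNReal.toReal_mono (measure_ne_top _ _) h2
          rwa [ENNReal.toReal_mul, ENNReal.toReal_ofNat] at this
        have hqb : (μ j (A.piece j)).toReal ≤ b := by
          rw [hbsum]
          have : 0 ≤ ∑ g ∈ A.ind j, vM j g := Finset.sum_nonneg fun g _ => hnonneg j g
          linarith
        have hUj' : 0 < util vM μ A' j := by
          rw [hUj]
          have h3 : 0 ≤ (μ j t).toReal := ENNReal.toReal_nonneg
          linarith
        apply mnw_card_contra hA A' ?_ i hapos (by rw [hUi, ha, zero_add]; exact hpt)
        intro k hk
        by_cases hki : k = i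
        · rw [hki, hUi]; linarith
        · by_cases hkj : k = j
          · rw [hkj]; exact hUj'
          · rwa [hA', util_transfer_other _ _ _ _ _ _ _ _ _ k hki hkj]
  · -- b = 0 : transfer everything from j to i
    have hb : b = 0 := le_antisymm (not_lt.1 hbpos) hb0
    set A' := A.transfer i j hij (A.ind j) Finset.Subset.rfl (A.piece j)
      (A.piece_measurable j) Set.Subset.rfl with hA'
    have hUi : util vM μ A' i = a + P := by
      rw [hA', util_transfer_i, hPsum]
    have hUj : util vM μ A' j = 0 := by
      rw [hA', util_transfer_j, ← hbsum, ← hb_def]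
      exact sub_self b
    have hP0 : 0 < P := lt_of_le_of_lt ha0 hPa
    have hpos : ∀ k, 0 < util vM μ A k → 0 < util vM μ A' k := by
      intro k hk
      by_cases hki : k = i
      · rw [hki, hUi]; linarith [hki ▸ hk]
      · by_cases hkj : k = j
        · rw [hkj] at hk; rw [← hb_def] at hk; linarith
        · rwa [hA', util_transfer_other _ _ _ _ _ _ _ _ _ k hki hkj]
    by_cases hapos : 0 < a
    · apply mnw_prod_contra hA A' hpos
      apply prod_lt_one_change ((mem_posSet_iff vM μ A i).2 hapos)
        (fun k hk => (mem_posSet_iff vM μ A k).1 hk)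
      · intro k hk hki
        have hkj : k ≠ j := by
          intro hkj
          rw [hkj] at hk
          exact hbpos ((mem_posSet_iff vM μ A j).1 hk)
        exact hA' ▸ util_transfer_other _ _ _ _ _ _ _ _ _ k hki hkj
      · rw [hUi, ← ha_def]; linarith
    · exact mnw_card_contra hA A' hpos i hapos (by rw [hUi]; linarith)

end Main

/-- when all agents have additive valuations, every maximum Nash
welfare (MNW) allocation of the mixed goods is EF1M and PO. -/
theorem MNW_is_EF1M_and_PO {n m l : ℕ}
    (vM : Fin n → Fin m → ℝ) (μ : Fin n → Measure ℝ)
    [∀ i, IsFiniteMeasure (μ i)]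
    (hnonneg : ∀ i g, 0 ≤ vM i g)
    (hatom : ∀ (i : Fin n) (x : ℝ), μ i {x} = 0)
    (hagent : ∀ i : Fin n, (∃ g, 0 < vM i g) ∨ μ i (Set.Ico (0 : ℝ) 1) ≠ 0)
    (hgoodM : ∀ g : Fin m, ∃ i, 0 < vM i g)
    (hgoodC : ∀ j : Fin l, ∃ i, μ i (dgInterval l j) ≠ 0)
    (A : Alloc n m) (hA : MNW vM μ A) :
    EF1M vM μ A ∧ PO vM μ A := by
  haveI : ∀ k : Fin n, NullSingletonClass (μ k) := fun k => ⟨hatom k⟩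
  constructor
  · -- EF1M
    intro i j
    by_cases hij : i = j
    · subst hij
      constructor
      · intro _
        exact le_of_eq rfl
      · intro hne
        obtain ⟨g, hg⟩ := Finset.nonempty_iff_ne_empty.2 hne
        refine ⟨g, hg, ?_⟩
        rw [valOnErase_eq A hg]
        have he : util vM μ A i = valOn vM μ A i i := rfl
        linarith [hnonneg i g]
    · constructor
      · intro hemp
        by_contra hcon
        push_neg at hcon
        exact no_envy hnonneg hatom hA hij (Or.inl ⟨hemp, hcon⟩)
      · intro hne
        by_contra hcon
        push_neg at hcon
        exact no_envy hnonneg hatom hA hij (Or.inr ⟨hne, hcon⟩)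
  · -- PO
    rintro ⟨A', hle, k, hk⟩
    by_cases hkp : 0 < util vM μ A k
    · apply mnw_prod_contra hA A' (fun k' h => lt_of_lt_of_le h (hle k'))
      apply Finset.prod_lt_prod (fun k' hk' => (mem_posSet_iff vM μ A k').1 hk')
        (fun k' _ => hle k')
      exact ⟨k, (mem_posSet_iff vM μ A k).2 hkp, hk⟩
    · exact mnw_card_contra hA A' (fun k' h => lt_of_lt_of_le h (hle k')) k hkp
        (lt_of_le_of_lt (util_nonneg vM μ hnonneg A k) hk)
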